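/- Let A be a divisor of F and let a = Σ_{i=0}^{μ−1} a_i y_i^{(A)} ∈ Я(A) with a_i ∈ 𝔽_q[x]. Then for every i, deg a_i ≤ (δ_A(a) − δ_A(y_i^{(A)}))/μ ≤ (δ_A(a) + deg A)/μ. -/

import Mathlib

noncomputable section

open Polynomial
attribute [local instance] Classical.propDecidable

/-- Abstract axiomatization of the data of an algebraic function field of one
variable of genus `genus` whose full field of constants is the finite field `Fq`:
a field `F` of functions, a set of places with their discrete valuations `v`
(normalized so that each valuation is surjective onto `ℤ`; by convention
`v P 0 = 0`), degrees of places, evaluation of functions at rational places,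
Riemann–Roch spaces `RRmod A` of divisors `A : Place →₀ ℤ` together with the
statement of the Riemann–Roch theorem tying their dimensions to the genus. -/
structure FnF (Fq : Type) [Field Fq] where
  F : Type
  [fieldF : Field F]
  [algF : Algebra Fq F]
  Place : Type
  v : Place → F → ℤ
  v_zero : ∀ P, v P 0 = 0
  v_mul : ∀ (P : Place) (f g : F), f ≠ 0 → g ≠ 0 → v P (f * g) = v P f + v P g
  v_add : ∀ (P : Place) (f g : F), f + g ≠ 0 → f ≠ 0 → g ≠ 0 →
    min (v P f) (v P g) ≤ v P (f + g)
  v_neg : ∀ (P : Place) (f : F), v P (-f) = v P f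
  v_const : ∀ (P : Place) (c : Fq), v P (algebraMap Fq F c) = 0
  v_surj : ∀ P : Place, ∃ f : F, f ≠ 0 ∧ v P f = 1
  v_finite : ∀ f : F, f ≠ 0 → {P : Place | v P f ≠ 0}.Finite
  fullConstantField : ∀ f : F, f ≠ 0 → (∀ P, 0 ≤ v P f) →
    ∃ c : Fq, f = algebraMap Fq F c
  degPlace : Place → ℕ
  degPlace_pos : ∀ P, 0 < degPlace P
  eval : Place → F → Fq
  eval_add : ∀ (P : Place) (f g : F), degPlace P = 1 → 0 ≤ v P f → 0 ≤ v P g →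
    eval P (f + g) = eval P f + eval P g
  eval_mul : ∀ (P : Place) (f g : F), degPlace P = 1 → 0 ≤ v P f → 0 ≤ v P g →
    eval P (f * g) = eval P f * eval P g
  eval_const : ∀ (P : Place) (c : Fq), degPlace P = 1 →
    eval P (algebraMap Fq F c) = c
  eval_eq_zero_iff : ∀ (P : Place) (f : F), degPlace P = 1 → 0 ≤ v P f →
    (eval P f = 0 ↔ (f = 0 ∨ 1 ≤ v P f))
  genus : ℕ
  RRmod : (Place →₀ ℤ) → Submodule Fq F
  mem_RRmod : ∀ (A : Place →₀ ℤ) (f : F),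
    f ∈ RRmod A ↔ (f = 0 ∨ ∀ P, 0 ≤ v P f + A P)
  riemannRoch_le : ∀ A : Place →₀ ℤ,
    (A.sum fun P n => n * (degPlace P : ℤ)) + 1 - genus ≤
      (Module.finrank Fq (RRmod A) : ℤ)
  riemannRoch_eq : ∀ A : Place →₀ ℤ,
    2 * (genus : ℤ) - 1 ≤ (A.sum fun P n => n * (degPlace P : ℤ)) →
    (Module.finrank Fq (RRmod A) : ℤ) =
      (A.sum fun P n => n * (degPlace P : ℤ)) + 1 - genus
  RRmod_eq_bot : ∀ A : Place →₀ ℤ,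
    (A.sum fun P n => n * (degPlace P : ℤ)) < 0 → RRmod A = ⊥

attribute [instance] FnF.fieldF FnF.algF

namespace FnF

variable {Fq : Type} [Field Fq] (D : FnF Fq)

/-- Divisors of the function field. -/
abbrev Divisor := D.Place →₀ ℤ

/-- The degree of a divisor. -/
def degDiv (A : D.Divisor) : ℤ := A.sum fun P n => n * (D.degPlace P : ℤ)

/-- `Я(A) = ⋃ₘ L(m·P∞ + A)`, the functions whose pole divisor is bounded by
`A` away from `P∞`. -/
def Ya (Pinf : D.Place) (A : D.Divisor) : Set D.F :=
  {a | ∃ m : ℤ, a ∈ D.RRmod (Finsupp.single Pinf m + A)}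

/-- `δ_A(a) = -v_{P∞}(a) - A(P∞)`, the least `m` with `a ∈ L(m·P∞ + A)`
(meaningful for nonzero `a ∈ Я(A)`). -/
def deltaZ (Pinf : D.Place) (A : D.Divisor) (a : D.F) : ℤ :=
  -(D.v Pinf a) - A Pinf

/-- `δ_A(a)` with the convention `δ_A(0) = -∞`. -/
def delta (Pinf : D.Place) (A : D.Divisor) (a : D.F) : WithBot ℤ :=
  if a = 0 then ⊥ else (D.deltaZ Pinf A a : WithBot ℤ)

/-- The Weierstrass semigroup of a place `P∞`: pole orders at `P∞` of functions
regular away from `P∞`. -/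
def WSemigroup (Pinf : D.Place) : Set ℤ :=
  {m | ∃ f : D.F, f ≠ 0 ∧ D.v Pinf f = -m ∧ ∀ P, P ≠ Pinf → 0 ≤ D.v P f}

end FnF

namespace FnF

variable {Fq : Type} [Field Fq] (D : FnF Fq)

/-- `y : Fin μ → F` is the Apéry system of `Я(A)` (with respect to `P∞` and `μ`):
`y i` is a nonzero element of `Я(A)` of minimal `δ_A`-value among all nonzero
`a ∈ Я(A)` with `δ_A(a) ≡ i (mod μ)`. -/
def IsApery (Pinf : D.Place) (μ : ℕ) (A : D.Divisor) (y : Fin μ → D.F) : Prop :=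
  ∀ i : Fin μ, y i ∈ D.Ya Pinf A ∧ y i ≠ 0 ∧
    D.deltaZ Pinf A (y i) ≡ (i : ℤ) [ZMOD (μ : ℤ)] ∧
    ∀ a ∈ D.Ya Pinf A, a ≠ 0 → D.deltaZ Pinf A a ≡ (i : ℤ) [ZMOD (μ : ℤ)] →
      D.deltaZ Pinf A (y i) ≤ D.deltaZ Pinf A a

end FnF

namespace FnF

variable {Fq : Type} [Field Fq] (D : FnF Fq)

private lemma v_add_lt_case (P : D.Place) {f g : D.F} (hf : f ≠ 0) (hg : g ≠ 0)
    (hs : f + g ≠ 0) (hlt : D.v P f < D.v P g) : D.v P (f + g) = D.v P f := by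
  have h1 := D.v_add P f g hs hf hg
  rw [min_eq_left hlt.le] at h1
  refine le_antisymm ?_ h1
  by_contra hc
  push_neg at hc
  have hng : (-g : D.F) ≠ 0 := neg_ne_zero.mpr hg
  have h2 := D.v_add P (f + g) (-g) (by simpa using hf) hs hng
  rw [D.v_neg] at h2
  simp only [add_neg_cancel_right] at h2
  omega

lemma v_add_of_ne (P : D.Place) {f g : D.F} (hf : f ≠ 0) (hg : g ≠ 0)
    (hne : D.v P f ≠ D.v P g) :
    f + g ≠ 0 ∧ D.v P (f + g) = min (D.v P f) (D.v P g) := by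
  have hs : f + g ≠ 0 := by
    intro h
    have hgf : g = -f := eq_neg_of_add_eq_zero_right h
    apply hne
    rw [hgf, D.v_neg]
  refine ⟨hs, ?_⟩
  rcases lt_or_gt_of_ne hne with h | h
  · rw [min_eq_left h.le]
    exact D.v_add_lt_case P hf hg hs h
  · rw [min_eq_right h.le, add_comm]
    exact D.v_add_lt_case P hg hf (by rwa [add_comm]) h

lemma v_sum_eq (P : D.Place) {ι : Type} [DecidableEq ι] (S : Finset ι) (f : ι → D.F) :
    S.Nonempty → (∀ i ∈ S, f i ≠ 0) →
    (∀ i ∈ S, ∀ j ∈ S, D.v P (f i) = D.v P (f j) → i = j) →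
    (∑ i ∈ S, f i) ≠ 0 ∧ ∃ j ∈ S, D.v P (∑ i ∈ S, f i) = D.v P (f j) ∧
      ∀ k ∈ S, D.v P (f j) ≤ D.v P (f k) := by
  induction S using Finset.induction_on with
  | empty => intro h; simp at h
  | @insert i T hiT ih =>
    intro _ h0 hinj
    have hfi : f i ≠ 0 := h0 i (Finset.mem_insert_self i T)
    by_cases hT : T.Nonempty
    · obtain ⟨ht0, j, hjT, hvj, hmin⟩ := ih hT
        (fun k hk => h0 k (Finset.mem_insert_of_mem hk))
        (fun k hk l hl h => hinj k (Finset.mem_insert_of_mem hk) l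
          (Finset.mem_insert_of_mem hl) h)
      have hne : D.v P (f i) ≠ D.v P (∑ k ∈ T, f k) := by
        rw [hvj]
        intro h
        exact hiT ((hinj i (Finset.mem_insert_self i T) j
          (Finset.mem_insert_of_mem hjT) h) ▸ hjT)
      obtain ⟨hs, hv⟩ := D.v_add_of_ne P hfi ht0 hne
      rw [Finset.sum_insert hiT]
      refine ⟨hs, ?_⟩
      rcases le_total (D.v P (f i)) (D.v P (f j)) with hle | hle
      · refine ⟨i, Finset.mem_insert_self i T, ?_, ?_⟩
        · rw [hv, hvj, min_eq_left hle]
        · intro k hk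
          rcases Finset.mem_insert.mp hk with rfl | hk
          · exact le_refl _
          · exact hle.trans (hmin k hk)
      · refine ⟨j, Finset.mem_insert_of_mem hjT, ?_, ?_⟩
        · rw [hv, hvj, min_eq_right hle]
        · intro k hk
          rcases Finset.mem_insert.mp hk with rfl | hk
          · exact hle
          · exact hmin k hk
    · rw [Finset.not_nonempty_iff_eq_empty] at hT
      subst hT
      simp only [Finset.sum_insert (Finset.notMem_empty i), Finset.sum_empty, add_zero]
      refine ⟨hfi, i, Finset.mem_insert_self i _, rfl, ?_⟩
      intro k hk
      rcases Finset.mem_insert.mp hk with rfl | hk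
      · exact le_refl _
      · exact absurd hk (Finset.notMem_empty k)

lemma v_pow (P : D.Place) {x : D.F} (hx : x ≠ 0) (k : ℕ) :
    D.v P (x ^ k) = (k : ℤ) * D.v P x := by
  induction k with
  | zero => simpa using D.v_const P 1
  | succ n ih =>
    rw [pow_succ, D.v_mul P _ _ (pow_ne_zero n hx) hx, ih]
    push_cast
    ring

lemma v_aeval (P : D.Place) {x : D.F} (hvx : D.v P x < 0) {q : Polynomial Fq}
    (hq : q ≠ 0) :
    (Polynomial.aeval x q : D.F) ≠ 0 ∧
      D.v P (Polynomial.aeval x q) = (q.natDegree : ℤ) * D.v P x := by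
  classical
  have hx : x ≠ 0 := by
    intro h
    rw [h, D.v_zero] at hvx
    exact lt_irrefl 0 hvx
  have hrw : (Polynomial.aeval x q : D.F)
      = ∑ k ∈ q.support, algebraMap Fq D.F (q.coeff k) * x ^ k := by
    rw [Polynomial.aeval_def, Polynomial.eval₂_eq_sum, Polynomial.sum_def]
  have hc0 : ∀ k ∈ q.support, algebraMap Fq D.F (q.coeff k) ≠ 0 := fun k hk =>
    (map_ne_zero_iff _ (algebraMap Fq D.F).injective).mpr (Polynomial.mem_support_iff.mp hk)
  have hterm0 : ∀ k ∈ q.support, algebraMap Fq D.F (q.coeff k) * x ^ k ≠ 0 :=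
    fun k hk => mul_ne_zero (hc0 k hk) (pow_ne_zero k hx)
  have hvterm : ∀ k ∈ q.support, D.v P (algebraMap Fq D.F (q.coeff k) * x ^ k)
      = (k : ℤ) * D.v P x := by
    intro k hk
    rw [D.v_mul P _ _ (hc0 k hk) (pow_ne_zero k hx), D.v_const, D.v_pow P hx, zero_add]
  have hinj : ∀ k ∈ q.support, ∀ l ∈ q.support,
      D.v P (algebraMap Fq D.F (q.coeff k) * x ^ k)
        = D.v P (algebraMap Fq D.F (q.coeff l) * x ^ l) → k = l := by
    intro k hk l hl h
    rw [hvterm k hk, hvterm l hl] at h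
    exact_mod_cast mul_right_cancel₀ (ne_of_lt hvx) h
  obtain ⟨hne0, j, hjmem, hvsum, hmin⟩ := D.v_sum_eq P q.support _
    (Polynomial.nonempty_support_iff.mpr hq) hterm0 hinj
  have hj1 : j ≤ q.natDegree := Polynomial.le_natDegree_of_mem_supp j hjmem
  have hnd : q.natDegree ∈ q.support := Polynomial.natDegree_mem_support_of_nonzero hq
  have hj2 := hmin _ hnd
  rw [hvterm j hjmem, hvterm _ hnd] at hj2
  have hj3 : (q.natDegree : ℤ) ≤ (j : ℤ) := by nlinarith
  have hj : j = q.natDegree := le_antisymm hj1 (by exact_mod_cast hj3)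
  rw [hrw]
  refine ⟨hne0, ?_⟩
  rw [hvsum, hvterm j hjmem, hj]

lemma delta_ge (Pinf : D.Place) (hPinf : D.degPlace Pinf = 1)
    (A : D.Divisor) {w : D.F} (hw : w ∈ D.Ya Pinf A) (hw0 : w ≠ 0) :
    -D.degDiv A ≤ D.deltaZ Pinf A w := by
  obtain ⟨m, hm⟩ := hw
  rw [D.mem_RRmod] at hm
  rcases hm with h | h
  · exact absurd h hw0
  have hmem : w ∈ D.RRmod (Finsupp.single Pinf (D.deltaZ Pinf A w) + A) := by
    rw [D.mem_RRmod]
    refine Or.inr fun P => ?_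
    by_cases hP : P = Pinf
    · subst hP
      simp only [Finsupp.add_apply, Finsupp.single_eq_same, FnF.deltaZ]
      omega
    · have hP' := h P
      rw [Finsupp.add_apply, Finsupp.single_eq_of_ne' (fun hh => hP hh.symm), zero_add] at hP'
      rw [Finsupp.add_apply, Finsupp.single_eq_of_ne' (fun hh => hP hh.symm), zero_add]
      exact hP'
  by_contra hc
  push_neg at hc
  have hdd : D.degDiv (Finsupp.single Pinf (D.deltaZ Pinf A w) + A)
      = D.deltaZ Pinf A w + D.degDiv A := by
    unfold FnF.degDiv
    rw [Finsupp.sum_add_index' (h := fun P n => n * (D.degPlace P : ℤ))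
      (fun P => zero_mul _) (fun P b c => add_mul b c _),
      Finsupp.sum_single_index (h := fun P n => n * (D.degPlace P : ℤ)) (zero_mul _), hPinf]
    push_cast
    ring
  have hdeg : D.degDiv (Finsupp.single Pinf (D.deltaZ Pinf A w) + A) < 0 := by
    rw [hdd]; linarith
  rw [D.RRmod_eq_bot _ hdeg, Submodule.mem_bot] at hmem
  exact hw0 hmem

end FnF

open FnF in
/-- Let `A` be a divisor of `F` and `a = Σ_{i<μ} aᵢ·y_i^{(A)} ∈ Я(A)`
with `aᵢ ∈ 𝔽_q[x]`. Then for every `i`,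
`deg aᵢ ≤ (δ_A(a) − δ_A(y_i^{(A)}))/μ ≤ (δ_A(a) + deg A)/μ`.
(The first inequality is stated multiplied through by `μ`, for nonzero `aᵢ`; a nonzero
coefficient forces `a ≠ 0`, matching the convention `δ_A(0) = −∞`; the second inequality
is the inequality `δ_A(a) − δ_A(y_i^{(A)}) ≤ δ_A(a) + deg A` of the numerators.) -/
theorem coefficient_degree_bound
    {Fq : Type} [Field Fq] [Fintype Fq] (D : FnF Fq)
    (Pinf : D.Place) (hPinf : D.degPlace Pinf = 1)
    (μ : ℕ) (hμpos : 0 < μ) (hμmem : (μ : ℤ) ∈ D.WSemigroup Pinf)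
    (hμmin : ∀ m : ℤ, 0 < m → m ∈ D.WSemigroup Pinf → (μ : ℤ) ≤ m)
    (x : D.F) (hxv : D.v Pinf x = -(μ : ℤ)) (hxreg : ∀ P, P ≠ Pinf → 0 ≤ D.v P x)
    (A : D.Divisor) (y : Fin μ → D.F) (hy : D.IsApery Pinf μ A y)
    (a : D.F) (ha : a ∈ D.Ya Pinf A)
    (p : Fin μ → Polynomial Fq) (hrep : a = ∑ i, Polynomial.aeval x (p i) * y i) :
    ∀ i, (p i ≠ 0 → a ≠ 0 ∧
        (μ : ℤ) * ((p i).natDegree : ℤ) ≤ D.deltaZ Pinf A a - D.deltaZ Pinf A (y i)) ∧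
      D.deltaZ Pinf A a - D.deltaZ Pinf A (y i) ≤ D.deltaZ Pinf A a + D.degDiv A := by
  classical
  intro i
  obtain ⟨hyYa, hy0, hymod, _⟩ := hy i
  constructor
  · intro hpi
    have hvx : D.v Pinf x < 0 := by rw [hxv]; omega
    set T : Finset (Fin μ) := Finset.univ.filter (fun j => p j ≠ 0) with hT
    have hiT : i ∈ T := by simp [hT, hpi]
    have hpT : ∀ j ∈ T, p j ≠ 0 := by intro j hj; simpa [hT] using hj
    have hterm0 : ∀ j ∈ T, (Polynomial.aeval x (p j) * y j : D.F) ≠ 0 := fun j hj =>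
      mul_ne_zero (D.v_aeval Pinf hvx (hpT j hj)).1 (hy j).2.1
    have hvterm : ∀ j ∈ T, D.v Pinf (Polynomial.aeval x (p j) * y j)
        = ((p j).natDegree : ℤ) * D.v Pinf x + D.v Pinf (y j) := fun j hj => by
      rw [D.v_mul Pinf _ _ (D.v_aeval Pinf hvx (hpT j hj)).1 (hy j).2.1,
        (D.v_aeval Pinf hvx (hpT j hj)).2]
    have hinj : ∀ j ∈ T, ∀ k ∈ T,
        D.v Pinf (Polynomial.aeval x (p j) * y j)
          = D.v Pinf (Polynomial.aeval x (p k) * y k) → j = k := by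
      intro j hj k hk h
      rw [hvterm j hj, hvterm k hk, hxv] at h
      have heq : D.deltaZ Pinf A (y j) - D.deltaZ Pinf A (y k)
          = (μ : ℤ) * (((p k).natDegree : ℤ) - ((p j).natDegree : ℤ)) := by
        simp only [FnF.deltaZ]
        linear_combination -h
      have h1 : D.deltaZ Pinf A (y j) ≡ D.deltaZ Pinf A (y k) [ZMOD (μ : ℤ)] :=
        Int.ModEq.symm (Int.modEq_iff_dvd.mpr
          ⟨((p k).natDegree : ℤ) - ((p j).natDegree : ℤ), heq⟩)
      have hjk : ((j : ℕ) : ℤ) ≡ ((k : ℕ) : ℤ) [ZMOD (μ : ℤ)] :=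
        (((hy j).2.2.1).symm.trans h1).trans (hy k).2.2.1
      rw [Int.ModEq] at hjk
      rw [Int.emod_eq_of_lt (Int.natCast_nonneg _) (by exact_mod_cast j.isLt),
        Int.emod_eq_of_lt (Int.natCast_nonneg _) (by exact_mod_cast k.isLt)] at hjk
      exact Fin.ext (by exact_mod_cast hjk)
    obtain ⟨ha0, j0, hj0, hva, hmin⟩ := D.v_sum_eq Pinf T
      (fun j => Polynomial.aeval x (p j) * y j) ⟨i, hiT⟩ hterm0 hinj
    have ha' : a = ∑ j ∈ T, Polynomial.aeval x (p j) * y j := by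
      rw [hrep, hT]
      refine (Finset.sum_filter_of_ne ?_).symm
      intro j _ hne hpj
      apply hne
      rw [hpj]
      simp
    refine ⟨by rw [ha']; exact ha0, ?_⟩
    have h1 : D.v Pinf a ≤ D.v Pinf (Polynomial.aeval x (p i) * y i) := by
      rw [ha', hva]
      exact hmin i hiT
    rw [hvterm i hiT, hxv] at h1
    simp only [FnF.deltaZ]
    nlinarith [h1]
  · have := D.delta_ge Pinf hPinf A hyYa hy0
    linarith
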